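/- For the staircase shape of n cells, any cell-by-cell transformation into a horizontal line (moving one cell per step to an adjacent position) requires Ω(n^2) total single-cell moves, because the sum over cells of the L1 distance between the staircase and the line configurations is Ω(n^2). -/
import Mathlib


/-- The i-th cell (0-indexed) of the staircase: (⌈(i+1)/2⌉, ⌊(i+1)/2⌋). -/
def stairCell (i : ℕ) : ℤ × ℤ := (((i + 2) / 2 : ℕ), (((i + 1) / 2 : ℕ) : ℤ))

/-- L1 distance between two cells. -/
def dist1 (p q : ℤ × ℤ) : ℤ := |p.1 - q.1| + |p.2 - q.2|

private lemma sumfloor (n : ℕ) : 4 * (∑ i ∈ Finset.range n, (i + 1) / 2) + n % 2 = n * n := by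
  induction n with
  | zero => simp
  | succ n ih =>
    rw [Finset.sum_range_succ]
    have : (n + 1) * (n + 1) = n * n + 2 * n + 1 := by ring
    omega

/-- Any transformation from the staircase of n cells to a horizontal line of n cells,
moving one cell per step by L1 distance at most 2 (as rotations do), takes Ω(n²)
steps: T ≥ n²/16, since any matching between the two configurations has total L1
cost Ω(n²). -/
theorem stmt16 (n T : ℕ) (hn : 2 ≤ n) (f : ℕ → Fin n → ℤ × ℤ)
    (hinj : ∀ t : ℕ, Function.Injective (f t))
    (hstart : ∀ j : Fin n, f 0 j = stairCell j)
    (hend : ∀ j : Fin n, ∃ m : Fin n, f T j = ((m : ℤ) + 1, 0))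
    (hstep : ∀ t < T, ∃ j : Fin n,
      (∀ i : Fin n, i ≠ j → f (t + 1) i = f t i) ∧ dist1 (f t j) (f (t + 1) j) ≤ 2) :
    n * n ≤ 16 * T := by
  set Φ : ℕ → ℤ := fun t => ∑ j : Fin n, |(f t j).2| with hΦ
  have hT : Φ T = 0 := by
    apply Finset.sum_eq_zero
    intro j _
    obtain ⟨m, hm⟩ := hend j
    simp [hm]
  have hstepΦ : ∀ t < T, Φ t ≤ Φ (t + 1) + 2 := by
    intro t ht
    obtain ⟨j, hothers, hd⟩ := hstep t ht
    have h1 : Φ t - Φ (t + 1) = |(f t j).2| - |(f (t + 1) j).2| := by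
      simp only [hΦ]
      rw [← Finset.sum_sub_distrib, Finset.sum_eq_single j]
      · intro i _ hi
        rw [hothers i hi]; ring
      · intro h; exact absurd (Finset.mem_univ j) h
    have h2 : |(f t j).2| - |(f (t + 1) j).2| ≤ 2 := by
      have ha := abs_sub_abs_le_abs_sub (f t j).2 (f (t + 1) j).2
      have hb := abs_nonneg ((f t j).1 - (f (t + 1) j).1)
      simp only [dist1] at hd
      linarith
    linarith
  have main : ∀ t, t ≤ T → Φ (T - t) ≤ 2 * t := by
    intro t
    induction t with
    | zero => intro _; simp [hT]
    | succ t ih =>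
      intro h
      have h1 : T - (t + 1) < T := by omega
      have h2 : T - (t + 1) + 1 = T - t := by omega
      have h3 := hstepΦ _ h1
      rw [h2] at h3
      have h4 := ih (by omega)
      push_cast
      linarith
  have h0 : Φ 0 ≤ 2 * T := by simpa using main T le_rfl
  have hΦ0 : Φ 0 = ((∑ i ∈ Finset.range n, (i + 1) / 2 : ℕ) : ℤ) := by
    have e1 : Φ 0 = ∑ j : Fin n, (((j.1 + 1) / 2 : ℕ) : ℤ) := by
      apply Finset.sum_congr rfl
      intro j _
      rw [hstart, stairCell]
      exact abs_of_nonneg (Int.natCast_nonneg _)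
    rw [e1, ← Nat.cast_sum, Fin.sum_univ_eq_sum_range (fun i => (i + 1) / 2)]
  rw [hΦ0] at h0
  have h5 : (∑ i ∈ Finset.range n, (i + 1) / 2) ≤ 2 * T := by exact_mod_cast h0
  have h6 : 4 ≤ n * n := Nat.mul_le_mul hn hn
  have h7 := sumfloor n
  omega
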